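/- For a ∈ 𝔄, π(a) = 0 if and only if y(E(a* a)) = 0 for every character y in the pseudo-orbit 𝒢(x₀). -/

import Mathlib

open scoped ComplexOrder InnerProductSpace
open scoped CStarAlgebra

set_option linter.unusedSectionVars false
variable {A : Type*} [NormedRing A] [StarRing A] [CStarRing A]
  [NormedAlgebra ℂ A] [CompleteSpace A] [StarModule ℂ A]
  [PartialOrder A] [StarOrderedRing A]

/-- `n` is a normalizer of the subalgebra `M`: `n* M n ⊆ M` and `n M n* ⊆ M`
(in particular `n*n ∈ M` and `n n* ∈ M`, taking `h = 1`). -/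
structure IsNormalizer (M : StarSubalgebra ℂ A) (n : A) : Prop where
  conj_mem : ∀ h ∈ M, star n * h * n ∈ M
  conj_mem' : ∀ h ∈ M, n * h * star n ∈ M
  sq_mem : star n * n ∈ M
  sq_mem' : n * star n ∈ M

/-- `y = αₙ(x)`: the character `y` satisfies `x(n* h n) = y(h) · x(n*n)` for all `h ∈ M`. -/
def IsAlpha (M : StarSubalgebra ℂ A) (n : A) (hn : IsNormalizer M n)
    (x y : M →⋆ₐ[ℂ] ℂ) : Prop :=
  ∀ h : M, x ⟨star n * (h : A) * n, hn.conj_mem (h : A) h.2⟩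
    = y h * x ⟨star n * n, hn.sq_mem⟩

/-- `y` lies in the pseudo-orbit `𝒢(x₀)`: there is a normalizer `m` of `M` with
`x₀(m*m) ≠ 0` and `y = α_m(x₀)`. -/
def InPseudoOrbit (M : StarSubalgebra ℂ A) (x₀ y : M →⋆ₐ[ℂ] ℂ) : Prop :=
  ∃ m, ∃ hm : IsNormalizer M m,
    x₀ ⟨star m * m, hm.sq_mem⟩ ≠ 0 ∧ IsAlpha M m hm x₀ y

/-- Key algebraic identity: `(m* h m)(m* k m) = (m* (hk) m)(m* m)` for `k ∈ M`. -/
theorem normalizer_conj_mul (M : StarSubalgebra ℂ A)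
    (hMcomm : ∀ a ∈ M, ∀ b ∈ M, a * b = b * a)
    {m : A} (hm : IsNormalizer M m) (h k : A) (hk : k ∈ M) :
    (star m * h * m) * (star m * k * m) = (star m * (h * k) * m) * (star m * m) := by
  have hc : m * star m * k = k * (m * star m) := hMcomm _ hm.sq_mem' _ hk
  have h1 : (star m * h * m) * (star m * k * m)
      = star m * h * (m * star m * k) * m := by noncomm_ring
  rw [h1, hc]; noncomm_ring

/-- The multiplicativity relation for `f h := x₀(m* h m)`. -/
theorem char_conj_mul (M : StarSubalgebra ℂ A)
    (hMcomm : ∀ a ∈ M, ∀ b ∈ M, a * b = b * a)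
    (x₀ : M →⋆ₐ[ℂ] ℂ) {m : A} (hm : IsNormalizer M m) (h k : M) :
    x₀ ⟨star m * (h : A) * m, hm.conj_mem _ h.2⟩ * x₀ ⟨star m * (k : A) * m, hm.conj_mem _ k.2⟩
      = x₀ ⟨star m * ((h : A) * k) * m, hm.conj_mem _ (mul_mem h.2 k.2)⟩
        * x₀ ⟨star m * m, hm.sq_mem⟩ := by
  rw [← map_mul, ← map_mul]
  congr 1
  exact Subtype.ext (normalizer_conj_mul M hMcomm hm (h : A) (k : A) k.2)

theorem star_conj_eq (M : StarSubalgebra ℂ A) {m : A} (hm : IsNormalizer M m) (h : M) :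
    (⟨star m * ((star h : M) : A) * m, hm.conj_mem _ (star h : M).2⟩ : M)
      = star (⟨star m * (h : A) * m, hm.conj_mem _ h.2⟩ : M) := by
  apply Subtype.ext
  show star m * star (h : A) * m = star (star m * (h : A) * m)
  simp [star_mul, mul_assoc]

theorem char_conj_star (M : StarSubalgebra ℂ A)
    (x₀ : M →⋆ₐ[ℂ] ℂ) {m : A} (hm : IsNormalizer M m) (h : M) :
    x₀ ⟨star m * ((star h : M) : A) * m, hm.conj_mem _ (star h : M).2⟩
      = star (x₀ ⟨star m * (h : A) * m, hm.conj_mem _ h.2⟩) := by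
  rw [star_conj_eq M hm h, map_star]

/-- If `x₀(m* m) = 0` then `x₀(m* h m) = 0` for all `h ∈ M`. -/
theorem char_conj_eq_zero (M : StarSubalgebra ℂ A)
    (hMcomm : ∀ a ∈ M, ∀ b ∈ M, a * b = b * a)
    (x₀ : M →⋆ₐ[ℂ] ℂ) {m : A} (hm : IsNormalizer M m)
    (hc : x₀ ⟨star m * m, hm.sq_mem⟩ = 0) (h : M) :
    x₀ ⟨star m * (h : A) * m, hm.conj_mem _ h.2⟩ = 0 := by
  by_contra hne
  have := char_conj_mul M hMcomm x₀ hm h (star h)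
  rw [hc, mul_zero, char_conj_star M x₀ hm h] at this
  exact mul_ne_zero hne (star_ne_zero.mpr hne) this

set_option synthInstance.maxHeartbeats 400000 in
/-- When `x₀(m* m) ≠ 0`, the map `h ↦ x₀(m* h m)/x₀(m* m)` is a character. -/
noncomputable def alphaChar (M : StarSubalgebra ℂ A)
    (hMcomm : ∀ a ∈ M, ∀ b ∈ M, a * b = b * a)
    (x₀ : M →⋆ₐ[ℂ] ℂ) {m : A} (hm : IsNormalizer M m)
    (hc : x₀ ⟨star m * m, hm.sq_mem⟩ ≠ 0) : M →⋆ₐ[ℂ] ℂ where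
  toFun h := x₀ ⟨star m * (h : A) * m, hm.conj_mem _ h.2⟩ / x₀ ⟨star m * m, hm.sq_mem⟩
  map_one' := by
    have : (⟨star m * ((1 : M) : A) * m, hm.conj_mem _ (1 : M).2⟩ : M)
        = ⟨star m * m, hm.sq_mem⟩ := by
      apply Subtype.ext; show star m * (1 : A) * m = star m * m; rw [mul_one]
    rw [this, div_self hc]
  map_mul' h k := by
    have key := char_conj_mul M hMcomm x₀ hm h k
    have : (⟨star m * (((h * k : M) : A)) * m, hm.conj_mem _ (h * k : M).2⟩ : M)
        = ⟨star m * ((h : A) * k) * m, hm.conj_mem _ (mul_mem h.2 k.2)⟩ := rfl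
    rw [this]
    field_simp
    linear_combination (-1 : ℂ) * key
  map_zero' := by
    have : (⟨star m * (((0 : M) : A)) * m, hm.conj_mem _ (0 : M).2⟩ : M) = 0 := by
      apply Subtype.ext; show star m * (0 : A) * m = 0; simp
    rw [this, map_zero, zero_div]
  map_add' h k := by
    have : (⟨star m * (((h + k : M) : A)) * m, hm.conj_mem _ (h + k : M).2⟩ : M)
        = ⟨star m * (h : A) * m, hm.conj_mem _ h.2⟩
          + ⟨star m * (k : A) * m, hm.conj_mem _ k.2⟩ := by
      apply Subtype.ext
      show star m * ((h : A) + k) * m = star m * (h : A) * m + star m * (k : A) * m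
      noncomm_ring
    rw [this, map_add, add_div]
  commutes' r := by
    have : (⟨star m * ((algebraMap ℂ M r : M) : A) * m,
        hm.conj_mem _ (algebraMap ℂ M r : M).2⟩ : M)
        = algebraMap ℂ M r * ⟨star m * m, hm.sq_mem⟩ := by
      apply Subtype.ext
      show star m * (algebraMap ℂ A r) * m = algebraMap ℂ A r * (star m * m)
      rw [← Algebra.commutes r (star m), mul_assoc]
    rw [this, map_mul, AlgHomClass.commutes]
    exact mul_div_cancel_right₀ _ hc
  map_star' h := by
    rw [char_conj_star M x₀ hm h]
    rw [div_eq_mul_inv, div_eq_mul_inv, star_mul', star_inv₀]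
    congr 2
    have : star (⟨star m * m, hm.sq_mem⟩ : M) = ⟨star m * m, hm.sq_mem⟩ := by
      apply Subtype.ext; show star (star m * m) = star m * m; simp [star_mul]
    rw [← map_star, this]

theorem pi_eq_zero_iff_vanishes_on_pseudoOrbit
    (M : StarSubalgebra ℂ A) (hMclosed : IsClosed (M : Set A))
    (hMcomm : ∀ a ∈ M, ∀ b ∈ M, a * b = b * a)
    (E : A →ₗ[ℂ] A)
    (hErange : ∀ a, E a ∈ M)
    (hEfix : ∀ h ∈ M, E h = h)
    (hEpos : ∀ a : A, 0 ≤ a → 0 ≤ E a)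
    (hEcov : ∀ k, IsNormalizer M k → ∀ a, E (star k * a * k) = star k * E a * k)
    (hreg : Dense (↑(Submodule.span ℂ {n : A | IsNormalizer M n}) : Set A))
    (x₀ : M →⋆ₐ[ℂ] ℂ)
    {H : Type*} [NormedAddCommGroup H] [InnerProductSpace ℂ H] [CompleteSpace H]
    (π : A →⋆ₐ[ℂ] (H →L[ℂ] H)) (ξ : H)
    (hcyc : Dense (Set.range fun a : A => π a ξ))
    (hGNS : ∀ a : A, ⟪ξ, π a ξ⟫_ℂ = x₀ ⟨E a, hErange a⟩) :
    ∀ a : A, π a = 0 ↔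
      ∀ y : M →⋆ₐ[ℂ] ℂ, InPseudoOrbit M x₀ y →
        y ⟨E (star a * a), hErange _⟩ = 0 := by
  intro a
  letI : CStarAlgebra A := ⟨⟩
  -- the basic computation: for a normalizer m,
  -- ⟪π a (π m ξ), π a (π m ξ)⟫ = x₀ (m* E(a*a) m)
  have hinner : ∀ (m : A) (hm : IsNormalizer M m),
      ⟪π a (π m ξ), π a (π m ξ)⟫_ℂ
        = x₀ ⟨star m * E (star a * a) * m, hm.conj_mem _ (hErange _)⟩ := by
    intro m hm
    have h1 : star m * (star a * (a * m)) = star m * (star a * a) * m := by noncomm_ring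
    have h2 := hGNS (star m * (star a * (a * m)))
    have h3 : π (star m * (star a * (a * m)))
        = star (π m) * (star (π a) * (π a * π m)) := by
      simp [map_mul, map_star]
    have h4 : ⟪ξ, π (star m * (star a * (a * m))) ξ⟫_ℂ
        = ⟪π a (π m ξ), π a (π m ξ)⟫_ℂ := by
      rw [h3]
      simp only [ContinuousLinearMap.mul_apply]
      rw [ContinuousLinearMap.star_eq_adjoint, ContinuousLinearMap.star_eq_adjoint,
        ContinuousLinearMap.adjoint_inner_right, ContinuousLinearMap.adjoint_inner_right]
    rw [← h4, h2]
    congr 1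
    apply Subtype.ext
    show E (star m * (star a * (a * m))) = star m * E (star a * a) * m
    rw [h1, hEcov m hm]
  constructor
  · intro hπ y hy
    obtain ⟨m, hm, hc, halpha⟩ := hy
    have hz : x₀ ⟨star m * E (star a * a) * m, hm.conj_mem _ (hErange _)⟩ = 0 := by
      rw [← hinner m hm, hπ]
      simp
    have h0 : x₀ ⟨star m * E (star a * a) * m, hm.conj_mem _ (hErange _)⟩
        = y ⟨E (star a * a), hErange _⟩ * x₀ ⟨star m * m, hm.sq_mem⟩ :=
      halpha ⟨E (star a * a), hErange _⟩
    rw [hz] at h0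
    exact (mul_eq_zero.mp h0.symm).resolve_right hc
  · intro hy
    have hstep1 : ∀ (m : A) (hm : IsNormalizer M m),
        x₀ ⟨star m * E (star a * a) * m, hm.conj_mem _ (hErange _)⟩ = 0 := by
      intro m hm
      by_cases hc : x₀ ⟨star m * m, hm.sq_mem⟩ = 0
      · exact char_conj_eq_zero M hMcomm x₀ hm hc ⟨E (star a * a), hErange _⟩
      · have halpha : IsAlpha M m hm x₀ (alphaChar M hMcomm x₀ hm hc) := by
          intro h
          exact (div_mul_cancel₀ _ hc).symm
        have hyy := hy (alphaChar M hMcomm x₀ hm hc) ⟨m, hm, hc, halpha⟩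
        have : x₀ ⟨star m * E (star a * a) * m, hm.conj_mem _ (hErange _)⟩
            / x₀ ⟨star m * m, hm.sq_mem⟩ = 0 := hyy
        rcases div_eq_zero_iff.mp this with h | h
        · exact h
        · exact absurd h hc
    have hstep2 : ∀ (m : A), IsNormalizer M m → π a (π m ξ) = 0 := by
      intro m hm
      have h := hinner m hm
      rw [hstep1 m hm] at h
      exact inner_self_eq_zero.mp h
    have hspan : ∀ b ∈ Submodule.span ℂ {n : A | IsNormalizer M n}, π a (π b ξ) = 0 := by
      intro b hb
      induction hb using Submodule.span_induction with
      | mem n hn => exact hstep2 n hn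
      | zero => simp
      | add u v hu hv ihu ihv => simp [map_add, ihu, ihv]
      | smul c u hu ih => simp [map_smul, ih]
    have hcont : Continuous fun b : A => π a (π b ξ) := by
      exact (π a).continuous.comp
        ((ContinuousLinearMap.apply ℂ H ξ).continuous.comp (map_continuous π))
    have hall : (fun b : A => π a (π b ξ)) = fun _ => 0 :=
      Continuous.ext_on hreg hcont continuous_const hspan
    have h2 : ∀ w ∈ Set.range (fun b : A => π b ξ), π a w = 0 := by
      rintro _ ⟨b, rfl⟩
      exact congrFun hall b
    have h3 : (fun w : H => π a w) = fun _ => 0 :=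
      Continuous.ext_on hcyc (π a).continuous continuous_const h2
    ext w
    exact congrFun h3 w
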